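/- arXiv:1810.03749 — 2 statements merged into one kernel-verified Lean document; each statement's English description precedes it below -/
import Mathlib

section
/- Let d ≥ 1, let C_free ⊆ ℝ^d, let σ : [0,1] → ℝ^d be a continuous path with clearance δ > 0 in C_free, and let ε > 0 with 2ε ≤ δ. Let S ⊆ ℝ^d be a set that is ε-dense along the path, i.e., for every t ∈ [0,1] there exists s ∈ S with dist(σ(t), s) ≤ ε. Then there exist m ∈ ℕ and points s₀, s₁, …, s_m ∈ S such that dist(s₀, σ(0)) ≤ ε, dist(s_m, σ(1)) ≤ ε, and for every i < m the closed segment [s_i, s_{i+1}] is contained in C_free. (This is the deterministic geometric core of the paper's Theorem 4, 'Joining of d-trees': once the sampled nodes are sufficiently dense along a feasible path, the disjointed trees containing nodes near the two endpoints can be joined through a chain of collision-free segments.) -/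
open Set Metric

/-- Deterministic core of tree joining: if `S` is `ε`-dense along a continuous path `σ`
with clearance `δ ≥ 2ε` in `C_free`, then there is a finite chain of points of `S`
starting `ε`-close to `σ 0`, ending `ε`-close to `σ 1`, whose consecutive closed
segments are all contained in `C_free`. -/
theorem chain_of_collision_free_segments_along_path
    (d : ℕ) (hd : 1 ≤ d)
    (Cfree : Set (EuclideanSpace ℝ (Fin d)))
    (σ : ℝ → EuclideanSpace ℝ (Fin d))
    (hcont : ContinuousOn σ (Icc (0 : ℝ) 1))
    (δ : ℝ) (hδ : 0 < δ)
    (hclear : ∀ t ∈ Icc (0 : ℝ) 1, closedBall (σ t) δ ⊆ Cfree)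
    (ε : ℝ) (hε : 0 < ε) (hεδ : 2 * ε ≤ δ)
    (S : Set (EuclideanSpace ℝ (Fin d)))
    (hdense : ∀ t ∈ Icc (0 : ℝ) 1, ∃ s ∈ S, dist (σ t) s ≤ ε) :
    ∃ (m : ℕ) (s : Fin (m + 1) → EuclideanSpace ℝ (Fin d)),
      (∀ i, s i ∈ S) ∧
      dist (s 0) (σ 0) ≤ ε ∧
      dist (s (Fin.last m)) (σ 1) ≤ ε ∧
      ∀ i : Fin m, segment ℝ (s i.castSucc) (s i.succ) ⊆ Cfree := by
  -- uniform continuity on the compact interval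
  have huc : UniformContinuousOn σ (Icc (0:ℝ) 1) :=
    isCompact_Icc.uniformContinuousOn_of_continuous hcont
  rw [Metric.uniformContinuousOn_iff] at huc
  obtain ⟨η, hη, hη'⟩ := huc ε hε
  obtain ⟨n, hn⟩ := exists_nat_one_div_lt hη
  -- partition points
  set N : ℕ := n + 1 with hN
  have hNpos : (0:ℝ) < N := by positivity
  set t : Fin (N + 1) → ℝ := fun i => (i : ℝ) / N with ht
  have htmem : ∀ i, t i ∈ Icc (0:ℝ) 1 := by
    intro i
    constructor
    · positivity
    · rw [div_le_one hNpos]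
      exact_mod_cast Nat.le_of_lt_succ i.isLt
  choose s hsS hsd using fun i => hdense (t i) (htmem i)
  refine ⟨N, s, hsS, ?_, ?_, ?_⟩
  · have : t 0 = 0 := by simp [ht]
    rw [dist_comm]
    simpa [this] using hsd 0
  · have : t (Fin.last N) = 1 := by
      simp [ht, Fin.last, div_self (ne_of_gt hNpos)]
    rw [dist_comm]
    simpa [this] using hsd (Fin.last N)
  · intro i
    have hstep : dist (t i.castSucc) (t i.succ) < η := by
      have : t i.succ - t i.castSucc = 1 / N := by
        simp only [ht, Fin.coe_castSucc, Fin.val_succ]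
        push_cast
        field_simp
        ring
      rw [Real.dist_eq, abs_sub_comm, this, abs_of_pos (by positivity)]
      calc 1/(N:ℝ) = 1/(n+1) := by push_cast [hN]; ring_nf
        _ < η := hn
    have hσstep : dist (σ (t i.castSucc)) (σ (t i.succ)) < ε := by
      rw [dist_comm] at hstep ⊢
      exact hη' _ (htmem _) _ (htmem _) hstep
    have h1 : s i.castSucc ∈ closedBall (σ (t i.castSucc)) δ := by
      rw [mem_closedBall, dist_comm]
      calc dist (σ (t i.castSucc)) (s i.castSucc) ≤ ε := hsd _
        _ ≤ δ := by linarith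
    have h2 : s i.succ ∈ closedBall (σ (t i.castSucc)) δ := by
      rw [mem_closedBall, dist_comm]
      calc dist (σ (t i.castSucc)) (s i.succ)
          ≤ dist (σ (t i.castSucc)) (σ (t i.succ)) + dist (σ (t i.succ)) (s i.succ) :=
            dist_triangle _ _ _
        _ ≤ ε + ε := by have := hsd i.succ; linarith
        _ ≤ δ := by linarith
    exact ((convex_closedBall _ _).segment_subset h1 h2).trans
      (hclear _ (htmem i.castSucc))
end

section
/- Let d ≥ 1, let C_free ⊆ ℝ^d, let σ : [0,1] → ℝ^d be a continuous path with clearance δ > 0 in C_free from q_init = σ(0) to q_goal = σ(1), and let ε > 0 with 2ε ≤ δ. Let μ be a Borel probability measure on ℝ^d such that μ(ball(σ(t), ε/2)) > 0 for every t ∈ [0,1], and let (X_n)_{n∈ℕ} be an i.i.d. sequence of random variables with common law μ on a probability space (Ω, P). Then P-almost surely there exist m ∈ ℕ and indices n₀, n₁, …, n_m ∈ ℕ such that dist(X_{n₀}, q_init) ≤ ε, dist(X_{n_m}, q_goal) ≤ ε, and for every i < m the closed segment [X_{n_i}, X_{n_{i+1}}] is contained in C_free. (This is an honest probabilistic-completeness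 statement corresponding to the paper's Theorem 2: given a feasible path with positive clearance, random sampling almost surely eventually produces a chain of collision-free straight-line connections from the initial configuration to the goal configuration.) -/
open Set Metric MeasureTheory ProbabilityTheory

private lemma seg_dist_aux {E : Type*} [NormedAddCommGroup E] [NormedSpace ℝ E]
    {x y u v : E} {r : ℝ} (hr : 0 ≤ r) (hx : dist x u ≤ r) (hy : dist y v ≤ r)
    (huv : dist u v ≤ r) : ∀ z ∈ segment ℝ x y, dist z u ≤ 2 * r := by
  rintro z ⟨a, b, ha, hb, hab, rfl⟩
  have hb1 : b ≤ 1 := by linarith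
  have h1 : dist (a • x + b • y) (a • u + b • v) ≤ r := by
    calc dist (a • x + b • y) (a • u + b • v)
        ≤ dist (a • x) (a • u) + dist (b • y) (b • v) := dist_add_add_le _ _ _ _
      _ = a * dist x u + b * dist y v := by
          rw [dist_smul₀, dist_smul₀, Real.norm_of_nonneg ha, Real.norm_of_nonneg hb]
      _ ≤ a * r + b * r := by gcongr
      _ = r := by rw [← add_mul, hab, one_mul]
  have h2 : dist (a • u + b • v) u ≤ r := by
    have hu : a • u + b • u = u := by rw [← add_smul, hab, one_smul]
    calc dist (a • u + b • v) u = dist (a • u + b • v) (a • u + b • u) := by rw [hu]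
      _ ≤ dist (a • u) (a • u) + dist (b • v) (b • u) := dist_add_add_le _ _ _ _
      _ = b * dist v u := by simp [dist_smul₀, Real.norm_of_nonneg hb]
      _ ≤ r := by
          have hvu : dist v u ≤ r := by rwa [dist_comm]
          nlinarith [dist_nonneg (x := v) (y := u)]
  calc dist (a • x + b • y) u ≤ dist (a • x + b • y) (a • u + b • v)
        + dist (a • u + b • v) u := dist_triangle _ _ _
    _ ≤ 2 * r := by linarith

private lemma exists_hit_aux {E : Type*} [MeasurableSpace E] {Ω : Type*} [MeasurableSpace Ω]
    (P : Measure Ω) [IsProbabilityMeasure P] (X : ℕ → Ω → E)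
    (hindep : iIndepFun X P)
    (hmeas : ∀ n, Measurable (X n)) (μ : Measure E)
    (hlaw : ∀ n, Measure.map (X n) P = μ)
    (B : Set E) (hB : MeasurableSet B) (hpos : 0 < μ B) :
    ∀ᵐ ω ∂P, ∃ n, X n ω ∈ B := by
  set s : ℕ → Set Ω := fun n => X n ⁻¹' B with hs
  have hsm : ∀ n, MeasurableSet (s n) := fun n => (hmeas n) hB
  have hPs : ∀ n, P (s n) = μ B := fun n => by
    rw [hs, ← hlaw n, Measure.map_apply (hmeas n) hB]
  have hind : iIndepSet s P := by
    rw [iIndepSet_iff_meas_biInter hsm]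
    intro S
    exact hindep.meas_biInter (fun i _ => ⟨B, hB, rfl⟩)
  have htsum : (∑' n, P (s n)) = ⊤ := by
    simp_rw [hPs]
    exact ENNReal.tsum_const_eq_top_of_ne_zero hpos.ne'
  have hone := measure_limsup_eq_one hsm hind htsum
  have hms : MeasurableSet (Filter.limsup s Filter.atTop) := MeasurableSet.measurableSet_limsup hsm
  have hcompl : P (Filter.limsup s Filter.atTop)ᶜ = 0 := by
    rw [measure_compl hms (measure_ne_top _ _), hone, measure_univ, tsub_self]
  have hae : ∀ᵐ ω ∂P, ω ∈ Filter.limsup s Filter.atTop := by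
    rw [ae_iff]
    exact hcompl
  filter_upwards [hae] with ω hω
  rw [Filter.mem_limsup_iff_frequently_mem] at hω
  exact hω.exists

/-- Probabilistic completeness: given a continuous feasible path with clearance
`δ ≥ 2ε` in `C_free`, and i.i.d. samples whose law charges every `ε/2`-ball around
path points, almost surely some finite chain of samples connects the initial
configuration to the goal via collision-free straight segments. -/
theorem iid_sampling_probabilistic_completeness
    (d : ℕ) (hd : 1 ≤ d)
    (Cfree : Set (EuclideanSpace ℝ (Fin d)))
    (σ : ℝ → EuclideanSpace ℝ (Fin d))
    (hcont : ContinuousOn σ (Icc (0 : ℝ) 1))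
    (δ : ℝ) (hδ : 0 < δ)
    (hclear : ∀ t ∈ Icc (0 : ℝ) 1, closedBall (σ t) δ ⊆ Cfree)
    (qinit qgoal : EuclideanSpace ℝ (Fin d))
    (hinit : σ 0 = qinit) (hgoal : σ 1 = qgoal)
    (ε : ℝ) (hε : 0 < ε) (hεδ : 2 * ε ≤ δ)
    (μ : Measure (EuclideanSpace ℝ (Fin d))) [IsProbabilityMeasure μ]
    (hμ : ∀ t ∈ Icc (0 : ℝ) 1, 0 < μ (ball (σ t) (ε / 2)))
    (Ω : Type*) [MeasurableSpace Ω]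
    (P : Measure Ω) [IsProbabilityMeasure P]
    (X : ℕ → Ω → EuclideanSpace ℝ (Fin d))
    (hindep : iIndepFun X P)
    (hmeas : ∀ n, Measurable (X n))
    (hlaw : ∀ n, Measure.map (X n) P = μ) :
    ∀ᵐ ω ∂P, ∃ (m : ℕ) (n : Fin (m + 1) → ℕ),
      dist (X (n 0) ω) qinit ≤ ε ∧
      dist (X (n (Fin.last m)) ω) qgoal ≤ ε ∧
      ∀ i : Fin m,
        segment ℝ (X (n i.castSucc) ω) (X (n i.succ) ω) ⊆ Cfree := by
  -- uniform continuity of σ on [0,1]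
  obtain ⟨η, hη, hunif⟩ : ∃ η > 0, ∀ a ∈ Icc (0:ℝ) 1, ∀ b ∈ Icc (0:ℝ) 1,
      dist a b < η → dist (σ a) (σ b) < ε / 2 := by
    have huc := isCompact_Icc.uniformContinuousOn_of_continuous hcont
    rw [Metric.uniformContinuousOn_iff] at huc
    obtain ⟨η, hη, h⟩ := huc (ε / 2) (by linarith)
    exact ⟨η, hη, fun a ha b hb hab => h a ha b hb hab⟩
  -- choose m with 1/m < η
  obtain ⟨m, hmgt⟩ := exists_nat_gt (1 / η)
  have hm0 : 0 < m := by
    by_contra h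
    push_neg at h
    interval_cases m
    simp only [Nat.cast_zero] at hmgt
    have : 0 < 1 / η := by positivity
    linarith
  have hmR : (0:ℝ) < m := by exact_mod_cast hm0
  have hinv : (1:ℝ) / m < η := by
    rw [div_lt_iff₀ hmR]
    calc (1:ℝ) = (1/η) * η := by field_simp
      _ < m * η := by exact mul_lt_mul_of_pos_right hmgt hη
      _ = η * m := mul_comm _ _
  -- the grid points
  have hmem : ∀ k : ℕ, k ≤ m → ((k : ℝ) / m) ∈ Icc (0:ℝ) 1 := by
    intro k hk
    constructor
    · positivity
    · rw [div_le_one hmR]; exact_mod_cast hk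
  -- a.s. every ball around a grid point is hit
  have hae : ∀ᵐ ω ∂P, ∀ j : Fin (m + 1), ∃ n,
      X n ω ∈ ball (σ ((j : ℝ) / m)) (ε / 2) := by
    rw [ae_all_iff]
    intro j
    exact exists_hit_aux P X hindep hmeas μ hlaw _ isOpen_ball.measurableSet
      (hμ _ (hmem j (Nat.lt_succ_iff.mp j.isLt)))
  filter_upwards [hae] with ω hω
  choose n hn using hω
  refine ⟨m, n, ?_, ?_, ?_⟩
  · -- initial
    have h0 := hn 0
    simp only [Fin.val_zero, Nat.cast_zero, zero_div] at h0
    rw [hinit] at h0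
    exact (mem_ball.mp h0).le.trans (by linarith)
  · -- goal
    have h1 := hn (Fin.last m)
    simp only [Fin.val_last] at h1
    rw [div_self hmR.ne', hgoal] at h1
    exact (mem_ball.mp h1).le.trans (by linarith)
  · -- segments
    intro i
    have hx := hn i.castSucc
    have hy := hn i.succ
    simp only [Fin.coe_castSucc, Fin.val_succ] at hx hy
    have hik : (i : ℕ) < m := i.isLt
    have hclose : dist (σ ((i : ℝ) / m)) (σ (((i : ℕ) + 1 : ℕ) / m)) < ε / 2 := by
      apply hunif _ (hmem i hik.le) _ (hmem (i + 1) hik)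
      have : dist ((i : ℝ) / m) ((((i : ℕ) + 1 : ℕ) : ℝ) / m) = 1 / m := by
        rw [Real.dist_eq, Nat.cast_add, Nat.cast_one, div_sub_div_same]
        rw [show (i:ℝ) - ((i:ℝ) + 1) = -1 by ring]
        rw [abs_div, abs_neg, abs_one, abs_of_pos hmR]
      rw [this]
      exact hinv
    intro z hz
    apply hclear _ (hmem i hik.le)
    rw [mem_closedBall]
    have hd : dist z (σ ((i : ℝ) / m)) ≤ 2 * (ε / 2) := by
      apply seg_dist_aux (by linarith)
        (mem_ball.mp hx).le (mem_ball.mp hy).le hclose.le _ hz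
    calc dist z (σ ((i : ℝ) / m)) ≤ 2 * (ε / 2) := hd
      _ = ε := by ring
      _ ≤ δ := by linarith
end
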